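/- Let G = {I, R₁, R₂, R₃} ⊂ SO(3) be the dihedral group of 180° rotations about the coordinate axes e₁, e₂, e₃, represented projectively on ℂ² by U(I)=I, U(R_i)=σ_i. Suppose N is a measurement assemblage on the bundle with total space Z = {+a,−a,+b,−b}, base T = {a,b}, where a = cosθ e₁ + sinθ e₂, b = cosθ e₁ − sinθ e₂, and suppose N is G-covariant (for the natural G-action on Z induced by the rotations). Then there exist ν ∈ [0,1] and φ ∈ ℝ such that N(±a) = (I ± c·σ)/2 and N(±b) = (I ± d·σ)/2, with c = ν(cosφ e₁ + sinφ e₂) and d = ν(cosφ e₁ − sinφ e₂). -/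

import Mathlib

open Matrix Complex Finset
open scoped ComplexOrder

noncomputable section

def σ1 : Matrix (Fin 2) (Fin 2) ℂ := !![0, 1; 1, 0]
def σ2 : Matrix (Fin 2) (Fin 2) ℂ := !![0, -Complex.I; Complex.I, 0]
def σ3 : Matrix (Fin 2) (Fin 2) ℂ := !![1, 0; 0, -1]

/-- `v·σ = v₁σ₁ + v₂σ₂ + v₃σ₃` -/
def dotσ (v : Fin 3 → ℝ) : Matrix (Fin 2) (Fin 2) ℂ :=
  (v 0 : ℂ) • σ1 + (v 1 : ℂ) • σ2 + (v 2 : ℂ) • σ3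

/-- a dihedral-covariant measurement assemblage on the bundle with total space
`Z = {+a, −a, +b, −b}` (sign `z : Bool`, `true ↦ +`; base point `k : Bool`, `false ↦ a`,
`true ↦ b`) is necessarily of the form `N(±a) = (I ± c·σ)/2`, `N(±b) = (I ± d·σ)/2` with
`c = ν(cosφ e₁ + sinφ e₂)`, `d = ν(cosφ e₁ − sinφ e₂)` for some `ν ∈ [0,1]` and `φ ∈ ℝ`.
The covariance hypotheses encode the action of the `180°` rotations `R₁, R₂, R₃` about the
coordinate axes (`R₁(±a) = ±b`, `R₂(±a) = ∓b`, `R₃(±a) = ∓a`) implemented by the Pauli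
matrices. -/
theorem stmt_13 (θ : ℝ) (hθ0 : 0 < θ) (hθ1 : θ ≤ Real.pi / 2)
    (N : Bool → Bool → Matrix (Fin 2) (Fin 2) ℂ)
    (hpos : ∀ z k, (N z k).PosSemidef)
    (hsum : ∀ k, N true k + N false k = 1)
    (hcov1 : ∀ z k, N z (!k) = σ1 * N z k * σ1)
    (hcov2 : ∀ z k, N (!z) (!k) = σ2 * N z k * σ2)
    (hcov3 : ∀ z k, N (!z) k = σ3 * N z k * σ3) :
    ∃ ν φ : ℝ, 0 ≤ ν ∧ ν ≤ 1 ∧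
      (∀ z : Bool,
        N z false = ((1 : ℂ) / 2) •
          ((1 : Matrix (Fin 2) (Fin 2) ℂ) +
            (if z then (1 : ℂ) else -1) • dotσ ![ν * Real.cos φ, ν * Real.sin φ, 0]) ∧
        N z true = ((1 : ℂ) / 2) •
          ((1 : Matrix (Fin 2) (Fin 2) ℂ) +
            (if z then (1 : ℂ) else -1) • dotσ ![ν * Real.cos φ, -(ν * Real.sin φ), 0])) := by
  set b : ℂ := N true false 0 1 with hbdef
  have hherm := (hpos true false).1
  have hrep : N true false =
      !![N true false 0 0, b; (starRingEnd ℂ) b, N true false 1 1] := by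
    ext i j
    fin_cases i <;> fin_cases j
    · simp
    · simp [hbdef]
    · simpa using (hherm.apply 1 0).symm
    · simp
  have h3 := hcov3 true false
  simp only [Bool.not_true] at h3
  have hs := hsum false
  rw [h3, hrep] at hs
  rw [show σ3 * !![N true false 0 0, b; (starRingEnd ℂ) b, N true false 1 1] * σ3 =
      !![N true false 0 0, -b; -((starRingEnd ℂ) b), N true false 1 1] by
    simp [σ3, Matrix.mul_fin_two]] at hs
  have h00 : N true false 0 0 = 1/2 := by
    have := congrFun (congrFun hs 0) 0
    simp [Matrix.one_fin_two] at this
    linear_combination this / 2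
  have h11 : N true false 1 1 = 1/2 := by
    have := congrFun (congrFun hs 1) 1
    simp [Matrix.one_fin_two] at this
    linear_combination this / 2
  rw [h00, h11] at hrep
  -- PSD bound: |b|² ≤ 1/4
  have hq := (hpos true false).dotProduct_mulVec_nonneg ![b, -(1/2 : ℂ)]
  rw [hrep] at hq
  have hval : star ![b, -(1/2:ℂ)] ⬝ᵥ (!![1/2, b; (starRingEnd ℂ) b, 1/2] *ᵥ ![b, -(1/2:ℂ)])
      = ((1/8 - Complex.normSq b / 2 : ℝ) : ℂ) := by
    simp [dotProduct, Matrix.mulVec, Fin.sum_univ_two,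
      Complex.normSq_eq_conj_mul_self, map_ofNat]
    ring
  rw [hval, Complex.zero_le_real] at hq
  -- definitions of ν, φ
  set w : ℂ := 2 * (starRingEnd ℂ) b with hwdef
  refine ⟨‖w‖, w.arg, norm_nonneg w, ?_, ?_⟩
  · have h1 : ‖w‖ = 2 * ‖b‖ := by
      rw [hwdef, norm_mul]
      simp
    have h2 : ‖b‖ ^ 2 = Complex.normSq b := Complex.sq_norm b
    nlinarith [norm_nonneg b]
  -- key scalar identities
  have hw1 : ((‖w‖ * Real.cos w.arg : ℝ) : ℂ)
      + ((‖w‖ * Real.sin w.arg : ℝ) : ℂ) * Complex.I = 2 * (starRingEnd ℂ) b := by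
    rw [Complex.norm_mul_cos_arg, Complex.norm_mul_sin_arg, Complex.re_add_im]
  have hw2 : ((‖w‖ * Real.cos w.arg : ℝ) : ℂ)
      - ((‖w‖ * Real.sin w.arg : ℝ) : ℂ) * Complex.I = 2 * b := by
    have h := congrArg (starRingEnd ℂ) hw1
    simp only [map_add, _root_.map_mul, Complex.conj_ofReal, Complex.conj_I,
      Complex.conj_conj, map_ofNat] at h
    linear_combination h
  -- abstract the two real parameters
  obtain ⟨c1, hc1⟩ : ∃ c1, ‖w‖ * Real.cos w.arg = c1 := ⟨_, rfl⟩
  obtain ⟨c2, hc2⟩ : ∃ c2, ‖w‖ * Real.sin w.arg = c2 := ⟨_, rfl⟩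
  rw [hc1, hc2] at hw1 hw2 ⊢
  -- concrete forms of the four matrices
  have hMf : N false false = !![1/2, -b; -((starRingEnd ℂ) b), 1/2] := by
    rw [h3, hrep]
    simp [σ3, Matrix.mul_fin_two]
  have hTt : N true true = !![1/2, (starRingEnd ℂ) b; b, 1/2] := by
    have h1 := hcov1 true false
    simp only [Bool.not_false] at h1
    rw [h1, hrep]
    simp [σ1, Matrix.mul_fin_two]
  have hFt : N false true = !![1/2, -((starRingEnd ℂ) b); -b, 1/2] := by
    have h1 := hcov1 false false
    simp only [Bool.not_false] at h1
    rw [h1, hMf]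
    simp [σ1, Matrix.mul_fin_two]
  intro z
  cases z <;> refine ⟨?_, ?_⟩ <;>
    [rw [hMf]; rw [hFt]; rw [hrep]; rw [hTt]] <;>
    · ext i j
      fin_cases i <;> fin_cases j <;>
        simp [dotσ, σ1, σ2, σ3, Matrix.one_fin_two] <;>
        first
          | linear_combination hw1 / 2
          | linear_combination -hw1 / 2
          | linear_combination hw2 / 2
          | linear_combination -hw2 / 2
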